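/- Let D be a weakly self-orthogonal 1-design with block size k odd and all block intersection numbers odd. Let G act with all point orbits of length w and block orbits of lengths b_1,…,b_m, all of these odd numbers. Let O be the orbit matrix. Then the rows of the binary matrix [O | 𝟏] (O mod 2 augmented by the all-one column) span a binary self-orthogonal code of length v/w + 1. -/

import Mathlib

open Matrix Finset

private lemma stmt14_odd_cast {n : ℕ} (h : Odd n) : (n : ZMod 2) = 1 := by
  obtain ⟨m, rfl⟩ := h
  push_cast
  have h2 : (2 : ZMod 2) = 0 := rfl
  rw [h2]
  ring

/-- Summing a filter-count over a partition gives the global count. -/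
private lemma stmt14_partition {P : Type*} [Fintype P] {n : ℕ} (Vo : Fin n → Finset P)
    (hVpart : ∀ pt : P, ∃! j, pt ∈ Vo j) (Q : P → Prop) [DecidablePred Q] :
    ∑ j, ((Vo j).filter Q).card = (Finset.univ.filter Q).card := by
  classical
  have h1 : ∀ j, ((Vo j).filter Q).card
      = ∑ pt ∈ Finset.univ.filter Q, if pt ∈ Vo j then 1 else 0 := by
    intro j
    have hset : (Vo j).filter Q = (Finset.univ.filter Q).filter (fun pt => pt ∈ Vo j) := by
      ext pt; simp [Finset.mem_filter, and_comm]
    rw [hset, Finset.card_filter]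
  simp_rw [h1]
  rw [Finset.sum_comm]
  have h2 : ∀ pt ∈ Finset.univ.filter Q, (∑ j, if pt ∈ Vo j then 1 else 0) = 1 := by
    intro pt _
    obtain ⟨j₀, hj₀, huniq⟩ := hVpart pt
    rw [Finset.sum_eq_single j₀]
    · simp [hj₀]
    · intro j _ hj
      simp only [ite_eq_right_iff]
      intro hmem
      exact absurd (huniq j hmem) hj
    · intro h; exact absurd (Finset.mem_univ j₀) h
  rw [Finset.sum_congr rfl h2, Finset.sum_const, smul_eq_mul, mul_one]

theorem stmt14 {P B G : Type*} [Fintype P] [Fintype B] [Group G]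
    [MulAction G P] [MulAction G B]
    (Inc : B → P → Prop) [∀ x, DecidablePred (Inc x)]
    (hGInc : ∀ (g : G) (x : B) (pt : P), Inc x pt ↔ Inc (g • x) (g • pt))
    (k r : ℕ)
    (hk : ∀ x : B, (Finset.univ.filter (fun pt => Inc x pt)).card = k)
    (hr : ∀ pt : P, (Finset.univ.filter (fun x => Inc x pt)).card = r)
    (hkodd : Odd k)
    (hint : ∀ x x' : B, x ≠ x' →
      Odd (Finset.univ.filter (fun pt => Inc x pt ∧ Inc x' pt)).card)
    (n m w : ℕ) (Vo : Fin n → Finset P) (Bo : Fin m → Finset B) (bL : Fin m → ℕ)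
    (hVo : ∀ j, ∃ pt, (Vo j : Set P) = MulAction.orbit G pt)
    (hVpart : ∀ pt : P, ∃! j, pt ∈ Vo j)
    (hVw : ∀ j, (Vo j).card = w)
    (hBo : ∀ i, ∃ x, (Bo i : Set B) = MulAction.orbit G x)
    (hBpart : ∀ x : B, ∃! i, x ∈ Bo i)
    (hBL : ∀ i, (Bo i).card = bL i)
    (hwodd : Odd w) (hbodd : ∀ i, Odd (bL i))
    (hnw : n * w = Fintype.card P)
    (O : Matrix (Fin m) (Fin n) ℕ)
    (hO : ∀ i j, ∀ x ∈ Bo i, O i j = ((Vo j).filter (fun pt => Inc x pt)).card)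
    (A : Fin m → (Fin n ⊕ Fin 1) → ZMod 2)
    (hA : A = fun i => Sum.elim (fun j => ((O i j : ℕ) : ZMod 2)) (fun _ => 1)) :
    ∀ x ∈ Submodule.span (ZMod 2) (Set.range A),
      ∀ y ∈ Submodule.span (ZMod 2) (Set.range A), x ⬝ᵥ y = 0 := by
  classical
  -- Non-emptiness of orbits
  have hwpos : 0 < w := hwodd.pos
  have hVne : ∀ j, (Vo j).Nonempty := fun j =>
    Finset.card_pos.mp (by rw [hVw]; exact hwpos)
  have hBne : ∀ i, (Bo i).Nonempty := fun i =>
    Finset.card_pos.mp (by rw [hBL]; exact (hbodd i).pos)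
  choose pt₀ hpt₀ using hVne
  -- Block orbits are G-invariant
  have hBinv : ∀ t (g : G) x, x ∈ Bo t → g • x ∈ Bo t := by
    intro t g x hx
    obtain ⟨x₀, hx₀⟩ := hBo t
    have hx' : x ∈ (Bo t : Set B) := hx
    rw [hx₀] at hx'
    obtain ⟨h, rfl⟩ := hx'
    have : g • (h : G) • x₀ ∈ (Bo t : Set B) := by
      rw [hx₀, smul_smul]
      exact MulAction.mem_orbit _ _
    exact this
  -- The per-point block count
  set C : Fin m → P → ℕ := fun t pt => ((Bo t).filter (fun x' => Inc x' pt)).card with hC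
  -- It is G-equivariant, hence constant on point orbits
  have hCsmul : ∀ t (g : G) (pt : P), C t (g • pt) = C t pt := by
    intro t g pt
    apply Finset.card_nbij' (fun x' => g⁻¹ • x') (fun x' => g • x')
    · intro a ha
      rw [Finset.mem_coe, Finset.mem_filter] at ha ⊢
      refine ⟨hBinv t g⁻¹ a ha.1, ?_⟩
      have := (hGInc g (g⁻¹ • a) pt).symm
      rw [smul_inv_smul] at this
      exact this.mp ha.2
    · intro a ha
      rw [Finset.mem_coe, Finset.mem_filter] at ha ⊢
      exact ⟨hBinv t g a ha.1, (hGInc g a pt).mp ha.2⟩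
    · intro a _; simp
    · intro a _; simp
  have hCconst : ∀ t j, ∀ pt ∈ Vo j, C t pt = C t (pt₀ j) := by
    intro t j pt hpt
    obtain ⟨p₀, hp₀⟩ := hVo j
    have h1 : pt ∈ (Vo j : Set P) := hpt
    have h2 : pt₀ j ∈ (Vo j : Set P) := hpt₀ j
    rw [hp₀] at h1 h2
    obtain ⟨g, rfl⟩ := h1
    obtain ⟨g', hg'⟩ := h2
    rw [← hg', hCsmul, hCsmul]
  -- Double counting: bL t * O t j = w * C t (pt₀ j)
  have h1 : ∀ t j, bL t * O t j = w * C t (pt₀ j) := by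
    intro t j
    have lhs : ∑ x' ∈ Bo t, ((Vo j).filter (fun pt => Inc x' pt)).card = bL t * O t j := by
      rw [Finset.sum_congr rfl (fun x' hx' => (hO t j x' hx').symm)]
      rw [Finset.sum_const, hBL, smul_eq_mul]
    have rhs : ∑ pt ∈ Vo j, C t pt = w * C t (pt₀ j) := by
      rw [Finset.sum_congr rfl (hCconst t j), Finset.sum_const, hVw, smul_eq_mul]
    rw [← lhs, ← rhs]
    simp_rw [hC, Finset.card_filter]
    exact Finset.sum_comm
  -- pick a base block x in Bo s; main parity computation
  have key : ∀ s t : Fin m, (∑ j, ((O s j * O t j : ℕ) : ZMod 2)) = 1 := by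
    intro s t
    obtain ⟨x, hx⟩ := hBne s
    -- replace O t j by C t (pt₀ j) mod 2
    have hOC : ∀ j, ((O t j : ℕ) : ZMod 2) = ((C t (pt₀ j) : ℕ) : ZMod 2) := by
      intro j
      have := congrArg (fun a : ℕ => (a : ZMod 2)) (h1 t j)
      push_cast at this
      rw [stmt14_odd_cast (hbodd t), stmt14_odd_cast hwodd, one_mul, one_mul] at this
      exact this
    have e1 : ∀ pt : P, (∑ x' ∈ Bo t, if Inc x pt ∧ Inc x' pt then 1 else 0)
        = if Inc x pt then C t pt else 0 := by
      intro pt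
      by_cases hp : Inc x pt
      · simp only [hp, true_and, if_true, hC]
        exact (Finset.card_filter _ _).symm
      · simp [hp]
    have h2 : ∀ j, (∑ x' ∈ Bo t, ((Vo j).filter (fun pt => Inc x pt ∧ Inc x' pt)).card)
        = O s j * C t (pt₀ j) := by
      intro j
      calc ∑ x' ∈ Bo t, ((Vo j).filter (fun pt => Inc x pt ∧ Inc x' pt)).card
          = ∑ x' ∈ Bo t, ∑ pt ∈ Vo j, if Inc x pt ∧ Inc x' pt then 1 else 0 := by
            simp_rw [Finset.card_filter]
        _ = ∑ pt ∈ Vo j, ∑ x' ∈ Bo t, if Inc x pt ∧ Inc x' pt then 1 else 0 :=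
            Finset.sum_comm
        _ = ∑ pt ∈ Vo j, if Inc x pt then C t pt else 0 :=
            Finset.sum_congr rfl fun pt _ => e1 pt
        _ = ∑ pt ∈ (Vo j).filter (fun pt => Inc x pt), C t pt :=
            (Finset.sum_filter _ _).symm
        _ = ∑ pt ∈ (Vo j).filter (fun pt => Inc x pt), C t (pt₀ j) :=
            Finset.sum_congr rfl fun pt hpt =>
              hCconst t j pt (Finset.mem_filter.mp hpt).1
        _ = O s j * C t (pt₀ j) := by
            rw [Finset.sum_const, ← hO s j x hx, smul_eq_mul]
    have h3 : ∑ j, O s j * C t (pt₀ j)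
        = ∑ x' ∈ Bo t, (Finset.univ.filter (fun pt => Inc x pt ∧ Inc x' pt)).card := by
      rw [← Finset.sum_congr rfl fun j (_ : j ∈ Finset.univ) => h2 j]
      rw [Finset.sum_comm]
      exact Finset.sum_congr rfl fun x' _ =>
        stmt14_partition Vo hVpart (fun pt => Inc x pt ∧ Inc x' pt)
    -- each intersection number is odd
    have h4 : ∀ x' ∈ Bo t,
        (((Finset.univ.filter (fun pt => Inc x pt ∧ Inc x' pt)).card : ℕ) : ZMod 2) = 1 := by
      intro x' _
      by_cases hxx : x = x'
      · subst hxx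
        have : (Finset.univ.filter (fun pt => Inc x pt ∧ Inc x pt)).card = k := by
          rw [← hk x]; congr 1; ext pt; simp
        rw [this]; exact stmt14_odd_cast hkodd
      · exact stmt14_odd_cast (hint x x' hxx)
    calc (∑ j, ((O s j * O t j : ℕ) : ZMod 2))
        = ∑ j, ((O s j : ℕ) : ZMod 2) * ((C t (pt₀ j) : ℕ) : ZMod 2) :=
          Finset.sum_congr rfl fun j _ => by rw [Nat.cast_mul, hOC j]
      _ = ((∑ j, O s j * C t (pt₀ j) : ℕ) : ZMod 2) := by push_cast; ring
      _ = ((∑ x' ∈ Bo t, (Finset.univ.filter (fun pt => Inc x pt ∧ Inc x' pt)).card : ℕ) : ZMod 2) := by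
          rw [h3]
      _ = ∑ x' ∈ Bo t, (((Finset.univ.filter (fun pt => Inc x pt ∧ Inc x' pt)).card : ℕ) : ZMod 2) := by
          push_cast; ring
      _ = ∑ x' ∈ Bo t, (1 : ZMod 2) := Finset.sum_congr rfl h4
      _ = 1 := by
          rw [Finset.sum_const, hBL, nsmul_eq_mul, mul_one, stmt14_odd_cast (hbodd t)]
  -- rows are pairwise orthogonal
  have rows : ∀ s t : Fin m, A s ⬝ᵥ A t = 0 := by
    intro s t
    subst hA
    rw [dotProduct, Fintype.sum_sum_type]
    simp only [Sum.elim_inl, Sum.elim_inr]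
    have hS : ∑ j : Fin n, ((O s j : ℕ) : ZMod 2) * ((O t j : ℕ) : ZMod 2) = 1 := by
      rw [← key s t]
      exact Finset.sum_congr rfl fun j _ => by rw [Nat.cast_mul]
    rw [hS, Fin.sum_univ_one, one_mul]
    decide
  -- extend to the span by bilinearity
  intro x hx y hy
  induction hx, hy using Submodule.span_induction₂ with
  | mem_mem u v hu hv =>
      obtain ⟨s, rfl⟩ := hu
      obtain ⟨t, rfl⟩ := hv
      exact rows s t
  | zero_left v hv => simp
  | zero_right u hu => simp
  | add_left u v z hu hv hz h1 h2 => rw [add_dotProduct, h1, h2, add_zero]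
  | add_right u v z hu hv hz h1 h2 => rw [dotProduct_add, h1, h2, add_zero]
  | smul_left c u v hu hv h => rw [smul_dotProduct, h, smul_zero]
  | smul_right c u v hu hv h => rw [dotProduct_smul, h, smul_zero]
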